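/- Let (ψ_I)_I be a wavelet system where each ψ_I is L²-normalized adapted to the dyadic interval I with |ψ_I(x)| ≤ |I|^{-1/2}(1+|I|^{-1}|x−c(I)|)^{-N} and each φ_I satisfies |φ_I(x)| ≤ |I|^{-1}(1+|I|^{-1}|x−c(I)|)^{-N}, with N ≥ 2. Then for all x ≠ t in ℝ, ∫_ℝ (∑_{I dyadic} φ_I(t)² ψ_I(x)² χ_I(y)/|I|)^{1/2} dy ≤ C/|x − t|, where the sum runs over all dyadic intervals I. -/

import Mathlib

open Real MeasureTheory

structure DyadicI where
  j : ℤ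
  k : ℤ

namespace DyadicI

/-- The length `2^j` of a dyadic interval. -/
noncomputable def len (I : DyadicI) : ℝ := (2 : ℝ) ^ I.j

/-- The underlying set `[k·2^j, (k+1)·2^j)` of a dyadic interval. -/
def toSet (I : DyadicI) : Set ℝ :=
  Set.Ico ((I.k : ℝ) * (2 : ℝ) ^ I.j) (((I.k : ℝ) + 1) * (2 : ℝ) ^ I.j)

/-- The center of a dyadic interval. -/
noncomputable def center (I : DyadicI) : ℝ := ((I.k : ℝ) + 1/2) * (2 : ℝ) ^ I.j

/-- The diameter of the union of two dyadic intervals. -/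
noncomputable def diamUnion (I J : DyadicI) : ℝ :=
  max (((I.k : ℝ) + 1) * (2 : ℝ) ^ I.j) (((J.k : ℝ) + 1) * (2 : ℝ) ^ J.j)
    - min ((I.k : ℝ) * (2 : ℝ) ^ I.j) ((J.k : ℝ) * (2 : ℝ) ^ J.j)

end DyadicI



section Statement8Aux


lemma geomZ0 {r A B : ℝ} (hr : 1 < r) {f : ℤ → ℝ} (h0 : ∀ j, 0 ≤ f j)
    (h1 : ∀ j, f j ≤ A * r ^ (-j)) (h2 : ∀ j, f j ≤ B * r ^ j) :
    Summable f ∧ ∑' j, f j ≤ (A + B) * (1 - r⁻¹)⁻¹ := by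
  have hr0 : (0:ℝ) < r := lt_trans one_pos hr
  have hinv0 : (0:ℝ) ≤ r⁻¹ := le_of_lt (inv_pos.mpr hr0)
  have hinv1 : r⁻¹ < 1 := by
    rw [inv_lt_one_iff₀]; right; exact hr
  have hgeo : Summable (fun n : ℕ => r⁻¹ ^ n) := summable_geometric_of_lt_one hinv0 hinv1
  have hzpow : ∀ n : ℕ, r ^ (-(n:ℤ)) = r⁻¹ ^ n := by
    intro n
    rw [zpow_neg, zpow_natCast, inv_pow]
  have h1' : ∀ n : ℕ, f n ≤ A * r⁻¹ ^ n := fun n => (h1 n).trans_eq (by rw [hzpow])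
  have h2' : ∀ n : ℕ, f (-n) ≤ B * r⁻¹ ^ n := fun n => by
    have := h2 (-n); rwa [zpow_neg, zpow_natCast, ← inv_pow] at this
  have sp : Summable (fun n : ℕ => f n) :=
    Summable.of_nonneg_of_le (fun n => h0 n) h1' (hgeo.mul_left A)
  have sn : Summable (fun n : ℕ => f (-n)) :=
    Summable.of_nonneg_of_le (fun n => h0 _) h2' (hgeo.mul_left B)
  have hsum : Summable f := Summable.of_nat_of_neg sp sn
  refine ⟨hsum, ?_⟩
  have htsum := Summable.tsum_of_nat_of_neg sp sn
  have hA : ∑' n : ℕ, f n ≤ A * (1 - r⁻¹)⁻¹ := by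
    calc ∑' n : ℕ, f n ≤ ∑' n : ℕ, A * r⁻¹ ^ n := Summable.tsum_le_tsum h1' sp (hgeo.mul_left A)
    _ = A * (1 - r⁻¹)⁻¹ := by rw [tsum_mul_left, tsum_geometric_of_lt_one hinv0 hinv1]
  have hB : ∑' n : ℕ, f (-n) ≤ B * (1 - r⁻¹)⁻¹ := by
    calc ∑' n : ℕ, f (-n) ≤ ∑' n : ℕ, B * r⁻¹ ^ n := Summable.tsum_le_tsum h2' sn (hgeo.mul_left B)
    _ = B * (1 - r⁻¹)⁻¹ := by rw [tsum_mul_left, tsum_geometric_of_lt_one hinv0 hinv1]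
  have h00 : (0:ℝ) ≤ f 0 := h0 0
  rw [htsum]
  push_cast
  ring_nf
  nlinarith [hA, hB, h00]

lemma geomZ {r A B : ℝ} (hr : 1 < r) {f : ℤ → ℝ} (h0 : ∀ j, 0 ≤ f j)
    (h1 : ∀ j, f j ≤ A * r ^ (-j)) (h2 : ∀ j, f j ≤ B * r ^ j) (m : ℤ) :
    Summable f ∧ ∑' j, f j ≤ (A * r ^ (-m) + B * r ^ m) * (1 - r⁻¹)⁻¹ := by
  have hr0 : (0:ℝ) < r := lt_trans one_pos hr
  have hrne : r ≠ 0 := ne_of_gt hr0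
  set e : ℤ ≃ ℤ := Equiv.addRight m with he
  have hcomp : ∀ i : ℤ, (f ∘ e) i = f (i + m) := fun i => rfl
  have h0' : ∀ i, 0 ≤ (f ∘ e) i := fun i => h0 _
  have h1' : ∀ i, (f ∘ e) i ≤ (A * r ^ (-m)) * r ^ (-i) := by
    intro i
    have := h1 (i + m)
    rw [hcomp]
    calc f (i + m) ≤ A * r ^ (-(i+m)) := this
    _ = A * r ^ (-m) * r ^ (-i) := by rw [neg_add, zpow_add₀ hrne]; ring
  have h2' : ∀ i, (f ∘ e) i ≤ (B * r ^ m) * r ^ i := by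
    intro i
    have := h2 (i + m)
    rw [hcomp]
    calc f (i + m) ≤ B * r ^ (i+m) := this
    _ = B * r ^ m * r ^ i := by rw [zpow_add₀ hrne]; ring
  obtain ⟨hs, hb⟩ := geomZ0 hr h0' h1' h2'
  refine ⟨e.summable_iff.mp hs, ?_⟩
  have : ∑' i, (f ∘ e) i = ∑' j, f j := e.tsum_eq f
  rw [← this]
  exact hb

noncomputable def qaux (u : ℝ) (k : ℤ) : ℝ := ((1 + |u - ((k:ℝ) + 1/2)|)^2)⁻¹

lemma qaux_nonneg (u : ℝ) (k : ℤ) : 0 ≤ qaux u k := by unfold qaux; positivity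

lemma qaux_le_one (u : ℝ) (k : ℤ) : qaux u k ≤ 1 := by
  unfold qaux
  rw [inv_le_one_iff₀]
  right
  nlinarith [abs_nonneg (u - ((k:ℝ) + 1/2))]

lemma intsq_summable : Summable (fun i : ℤ => (((i:ℝ))^2)⁻¹) := by
  have := summable_one_div_int_pow.mpr (by norm_num : 1 < 2)
  simpa [one_div] using this

lemma intsq_bound : ∑' i : ℤ, (((i:ℝ))^2)⁻¹ ≤ 6 := by
  have sp : Summable (fun n : ℕ => (((n:ℝ))^2)⁻¹) := by
    have := Real.summable_one_div_nat_pow.mpr (by norm_num : 2 ≤ 2)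
    simpa [one_div] using this
  have sneg : Summable (fun n : ℕ => ((((-n:ℤ)):ℝ)^2)⁻¹) := by
    simpa using sp
  have ht := Summable.tsum_of_nat_of_neg (f := fun i : ℤ => (((i:ℝ))^2)⁻¹) (by exact_mod_cast sp) sneg
  have hS : ∑' n : ℕ, (((n:ℝ))^2)⁻¹ = π^2/6 := by
    have := hasSum_zeta_two.tsum_eq
    simpa [one_div] using this
  have hpi : π ^ 2 / 6 ≤ 8/3 := by nlinarith [pi_le_four, pi_pos]
  have h2 : ∑' n : ℕ, ((((-n:ℤ)):ℝ)^2)⁻¹ = π^2/6 := by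
    rw [← hS]; apply tsum_congr; intro n; push_cast; rw [neg_sq]
  rw [ht]
  have : ∑' (n:ℕ), ((((n:ℤ)):ℝ)^2)⁻¹ = π^2/6 := by rw [← hS]; apply tsum_congr; intro n; norm_num
  rw [this, h2]
  norm_num
  nlinarith [hpi]

lemma ksum (u : ℝ) : Summable (fun k : ℤ => qaux u k) ∧ ∑' k : ℤ, qaux u k ≤ 25 := by
  set m : ℤ := ⌊u⌋ with hm
  have hfl1 : (m:ℝ) ≤ u := Int.floor_le u
  have hfl2 : u < m + 1 := Int.lt_floor_add_one u
  set g : ℤ → ℝ := fun k => (if k = m then (1:ℝ) else 0) + 4 * (((k:ℝ) - m)^2)⁻¹ with hg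
  have hqg : ∀ k, qaux u k ≤ g k := by
    intro k
    by_cases hk : k = m
    · rw [hk, hg]
      norm_num
      have := qaux_le_one u m
      have h4 : (0:ℝ) ≤ 4 * (((m:ℝ) - m)^2)⁻¹ := by positivity
      linarith
    · have hkm : (1:ℝ) ≤ |(k:ℝ) - m| := by
        have : k - m ≠ 0 := sub_ne_zero.mpr hk
        have : (1:ℤ) ≤ |k - m| := Int.one_le_abs this
        calc (1:ℝ) = ((1:ℤ):ℝ) := by norm_num
        _ ≤ ((|k - m|:ℤ):ℝ) := by exact_mod_cast this
        _ = |(k:ℝ) - m| := by push_cast [Int.cast_abs]; norm_num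
      have htri : |(k:ℝ) - m| ≤ |u - ((k:ℝ) + 1/2)| + 3/2 := by
        have h1 : |(k:ℝ) - m| ≤ |(k:ℝ) + 1/2 - u| + |u - m - 1/2| := by
          have := abs_sub_abs_le_abs_sub ((k:ℝ) - m) 0
          calc |(k:ℝ) - m| = |((k:ℝ) + 1/2 - u) + (u - m - 1/2)| := by ring_nf
          _ ≤ |(k:ℝ) + 1/2 - u| + |u - m - 1/2| := abs_add_le _ _
        have h2 : |u - (m:ℝ) - 1/2| ≤ 1 := by
          rw [abs_le]; constructor <;> [linarith; linarith]
        have h3 : |(k:ℝ) + 1/2 - u| = |u - ((k:ℝ) + 1/2)| := abs_sub_comm _ _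
        linarith [h1, h2, h3.le, h3.ge]
      have hhalf : |(k:ℝ) - m| / 2 ≤ 1 + |u - ((k:ℝ) + 1/2)| := by
        have : |(k:ℝ) - m| / 2 ≤ |(k:ℝ) - m| - 1/2 := by linarith
        linarith
      have hq : qaux u k ≤ ((|(k:ℝ) - m| / 2)^2)⁻¹ := by
        unfold qaux
        apply inv_anti₀
        · positivity
        · apply sq_le_sq' <;> nlinarith [abs_nonneg (u - ((k:ℝ) + 1/2))]
      have heq : ((|(k:ℝ) - m| / 2)^2)⁻¹ = 4 * (((k:ℝ) - m)^2)⁻¹ := by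
        rw [div_pow, sq_abs]
        rw [inv_div]
        ring
      rw [hg]
      simp only [if_neg hk]
      rw [← heq] at *
      linarith [hq]
  have hsm : Summable (fun k : ℤ => if k = m then (1:ℝ) else 0) := by
    apply summable_of_ne_finset_zero (s := {m})
    intro k hk
    simp only [Finset.mem_singleton] at hk
    simp [hk]
  have hsq : Summable (fun k : ℤ => 4 * (((k:ℝ) - m)^2)⁻¹) := by
    have : Summable (fun i : ℤ => 4 * (((i:ℝ))^2)⁻¹) := intsq_summable.mul_left 4
    have he := (Equiv.subRight m).summable_iff (f := fun i : ℤ => 4 * (((i:ℝ))^2)⁻¹)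
    rw [← he] at this
    convert this using 1
    funext k
    simp [Equiv.subRight]
  have hsg : Summable g := hsm.add hsq
  have hsum : Summable (fun k : ℤ => qaux u k) :=
    Summable.of_nonneg_of_le (fun k => qaux_nonneg u k) hqg hsg
  refine ⟨hsum, ?_⟩
  calc ∑' k, qaux u k ≤ ∑' k, g k := Summable.tsum_le_tsum hqg hsum hsg
  _ = (∑' k : ℤ, if k = m then (1:ℝ) else 0) + ∑' k : ℤ, 4 * (((k:ℝ) - m)^2)⁻¹ :=
      Summable.tsum_add hsm hsq
  _ ≤ 1 + 4 * 6 := by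
      have h1 : (∑' k : ℤ, if k = m then (1:ℝ) else 0) = 1 := tsum_ite_eq m 1
      have h2 : ∑' k : ℤ, 4 * (((k:ℝ) - m)^2)⁻¹ ≤ 4 * 6 := by
        have he := (Equiv.subRight m).tsum_eq (f := fun i : ℤ => 4 * (((i:ℝ))^2)⁻¹)
        have heq : (fun k : ℤ => 4 * ((((Equiv.subRight m) k : ℤ):ℝ)^2)⁻¹)
            = fun k : ℤ => 4 * (((k:ℝ) - m)^2)⁻¹ := by
          funext k
          simp [Equiv.subRight]
        rw [← heq]
        rw [he]
        rw [tsum_mul_left]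
        nlinarith [intsq_bound, tsum_nonneg (L := SummationFilter.unconditional ℤ) (fun i : ℤ => by positivity : ∀ i : ℤ, 0 ≤ (((i:ℝ))^2)⁻¹)]
      linarith
  _ ≤ 25 := by norm_num

lemma prodq {a b D : ℝ} (ha : 0 ≤ a) (hb : 0 ≤ b) (hD : 0 ≤ D) (hab : D ≤ a + b) :
    ((1+a)^2)⁻¹ * ((1+b)^2)⁻¹ ≤ 4 * ((1+D)^2)⁻¹ * (((1+a)^2)⁻¹ + ((1+b)^2)⁻¹) := by
  have hX : (0:ℝ) < (1+a)^2 := by positivity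
  have hY : (0:ℝ) < (1+b)^2 := by positivity
  have hZ : (0:ℝ) < (1+D)^2 := by positivity
  have key : (1+D)^2 ≤ 4 * ((1+a)^2 + (1+b)^2) := by
    nlinarith [sq_nonneg (a - b), mul_nonneg (sub_nonneg.mpr hab)
      (by linarith : (0:ℝ) ≤ 2 + a + b + D), mul_nonneg ha hb]
  rw [← sub_nonneg]
  have expand : 4 * ((1+D)^2)⁻¹ * (((1+a)^2)⁻¹ + ((1+b)^2)⁻¹) - ((1+a)^2)⁻¹ * ((1+b)^2)⁻¹
      = (4 * ((1+a)^2 + (1+b)^2) - (1+D)^2) * (((1+D)^2)⁻¹ * ((1+a)^2)⁻¹ * ((1+b)^2)⁻¹) := by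
    field_simp
    ring
  rw [expand]
  apply mul_nonneg
  · linarith
  · positivity

lemma sqrt_tsum_le {ι : Type*} {a B : ι → ℝ} (ha : ∀ i, 0 ≤ a i) (hB : ∀ i, 0 ≤ B i)
    (hle : ∀ i, a i ≤ B i ^ 2) (hs : Summable B) :
    Real.sqrt (∑' i, a i) ≤ ∑' i, B i := by
  have hBsq : Summable (fun i => B i * (∑' j, B j)) := hs.mul_right _
  have h1 : ∀ i, a i ≤ B i * ∑' j, B j := by
    intro i
    have h2 : B i ≤ ∑' j, B j := Summable.le_tsum hs i (fun j _ => hB j)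
    nlinarith [hB i, hle i]
  have hsa : Summable a := Summable.of_nonneg_of_le ha h1 hBsq
  have h3 : ∑' i, a i ≤ (∑' i, B i)^2 := by
    calc ∑' i, a i ≤ ∑' i, (B i * ∑' j, B j) := Summable.tsum_le_tsum h1 hsa hBsq
    _ = (∑' i, B i) * (∑' j, B j) := tsum_mul_right
    _ = (∑' i, B i)^2 := (sq _).symm
  calc Real.sqrt (∑' i, a i) ≤ Real.sqrt ((∑' i, B i)^2) := Real.sqrt_le_sqrt h3
  _ = |∑' i, B i| := Real.sqrt_sq_eq_abs _
  _ = ∑' i, B i := abs_of_nonneg (tsum_nonneg hB)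

def dyadicEquiv : ℤ × ℤ ≃ DyadicI where
  toFun p := ⟨p.1, p.2⟩
  invFun I := (I.j, I.k)
  left_inv p := rfl
  right_inv I := rfl

instance : Countable DyadicI := Countable.of_equiv _ dyadicEquiv

lemma len_pos (I : DyadicI) : 0 < I.len := zpow_pos two_pos I.j

lemma center_abs (I : DyadicI) (s : ℝ) :
    I.len⁻¹ * |s - I.center| = |I.len⁻¹ * s - ((I.k : ℝ) + 1/2)| := by
  have hL : (0:ℝ) < I.len := len_pos I
  have hne : I.len ≠ 0 := ne_of_gt hL
  have key : I.len⁻¹ * s - ((I.k:ℝ) + 1/2) = I.len⁻¹ * (s - I.center) := by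
    have hc : I.center = ((I.k:ℝ) + 1/2) * I.len := rfl
    rw [hc]
    field_simp
  rw [key, abs_mul, abs_of_pos (inv_pos.mpr hL)]

lemma rpow_le_qaux {N : ℕ} (hN : 2 ≤ N) (I : DyadicI) (s : ℝ) :
    (1 + I.len⁻¹ * |s - I.center|) ^ (-(N : ℝ)) ≤ qaux (I.len⁻¹ * s) I.k := by
  have hL : (0:ℝ) < I.len := len_pos I
  set z : ℝ := I.len⁻¹ * |s - I.center| with hz
  have hz0 : 0 ≤ z := by positivity
  have hbase : (1:ℝ) ≤ 1 + z := by linarith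
  have h1 : (1 + z) ^ (-(N:ℝ)) ≤ (1 + z) ^ (-(2:ℝ)) := by
    apply Real.rpow_le_rpow_of_exponent_le hbase
    have : (2:ℝ) ≤ (N:ℝ) := by exact_mod_cast hN
    linarith
  have h2 : (1 + z) ^ (-(2:ℝ)) = ((1 + z)^2)⁻¹ := by
    rw [Real.rpow_neg (by linarith), ← Real.rpow_natCast (1+z) 2]
    norm_num
  have h3 : ((1 + z)^2)⁻¹ = qaux (I.len⁻¹ * s) I.k := by
    rw [qaux, hz, center_abs]
  rw [← h3, ← h2]
  exact h1

lemma mem_floor {I : DyadicI} {y : ℝ} (hy : y ∈ I.toSet) : I.k = ⌊I.len⁻¹ * y⌋ := by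
  have hL : (0:ℝ) < I.len := len_pos I
  obtain ⟨h1, h2⟩ := hy
  have hLd : I.len = (2:ℝ) ^ I.j := rfl
  rw [← hLd] at h1 h2
  symm
  rw [Int.floor_eq_iff]
  constructor
  · have ha : I.len⁻¹ * ((I.k:ℝ) * I.len) ≤ I.len⁻¹ * y :=
      mul_le_mul_of_nonneg_left h1 (le_of_lt (inv_pos.mpr hL))
    have heq : I.len⁻¹ * ((I.k:ℝ) * I.len) = (I.k:ℝ) := by field_simp
    linarith
  · have ha : I.len⁻¹ * y < I.len⁻¹ * (((I.k:ℝ) + 1) * I.len) :=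
      mul_lt_mul_of_pos_left h2 (inv_pos.mpr hL)
    have heq : I.len⁻¹ * (((I.k:ℝ) + 1) * I.len) = (I.k:ℝ) + 1 := by field_simp
    push_cast
    push_cast at heq ha
    linarith

lemma mem_center_dist {I : DyadicI} {y : ℝ} (hy : y ∈ I.toSet) :
    |y - I.center| ≤ I.len / 2 := by
  have hL : (0:ℝ) < I.len := len_pos I
  obtain ⟨h1, h2⟩ := hy
  have hLd : (2:ℝ) ^ I.j = I.len := rfl
  rw [hLd] at h1 h2
  have hc : I.center = ((I.k:ℝ) + 1/2) * I.len := rfl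
  rw [abs_le, hc]
  constructor <;> nlinarith

lemma qaux_near {I : DyadicI} {y : ℝ} (hy : y ∈ I.toSet) (s : ℝ) :
    qaux (I.len⁻¹ * s) I.k ≤ 4 * ((1 + I.len⁻¹ * |s - y|)^2)⁻¹ := by
  have hL : (0:ℝ) < I.len := len_pos I
  have h1 : |s - y| ≤ |s - I.center| + I.len/2 := by
    have := mem_center_dist hy
    calc |s - y| = |(s - I.center) + (I.center - y)| := by rw [sub_add_sub_cancel]
    _ ≤ |s - I.center| + |I.center - y| := abs_add_le _ _
    _ ≤ |s - I.center| + I.len/2 := by rw [abs_sub_comm I.center y]; linarith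
  have h2 : I.len⁻¹ * |s - y| ≤ I.len⁻¹ * |s - I.center| + 1/2 := by
    have := mul_le_mul_of_nonneg_left h1 (le_of_lt (inv_pos.mpr hL))
    rw [mul_add] at this
    have heq : I.len⁻¹ * (I.len/2) = 1/2 := by field_simp
    linarith
  have hzc : 0 ≤ I.len⁻¹ * |s - I.center| := by positivity
  have h3 : (1 + I.len⁻¹ * |s - y|) ≤ 2 * (1 + I.len⁻¹ * |s - I.center|) := by linarith
  have h4 : (1 + I.len⁻¹ * |s - y|)^2 ≤ 4 * (1 + I.len⁻¹ * |s - I.center|)^2 := by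
    nlinarith [abs_nonneg (s - y), abs_nonneg (s - I.center), inv_pos.mpr hL,
      mul_nonneg (le_of_lt (inv_pos.mpr hL)) (abs_nonneg (s - y))]
  rw [qaux, ← center_abs]
  rw [← sub_nonneg]
  have hA : (0:ℝ) < (1 + I.len⁻¹ * |s - I.center|)^2 := by positivity
  have hB : (0:ℝ) < (1 + I.len⁻¹ * |s - y|)^2 := by positivity
  have expand : 4 * ((1 + I.len⁻¹ * |s - y|)^2)⁻¹ - ((1 + I.len⁻¹ * |s - I.center|)^2)⁻¹
      = (4 * (1 + I.len⁻¹ * |s - I.center|)^2 - (1 + I.len⁻¹ * |s - y|)^2)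
        * (((1 + I.len⁻¹ * |s - y|)^2)⁻¹ * ((1 + I.len⁻¹ * |s - I.center|)^2)⁻¹) := by
    field_simp
  rw [expand]
  apply mul_nonneg
  · linarith
  · positivity

noncomputable def bco (x t : ℝ) (I : DyadicI) : ℝ :=
  (I.len⁻¹)^2 * (qaux (I.len⁻¹ * t) I.k * qaux (I.len⁻¹ * x) I.k)

noncomputable def Bfun (x t : ℝ) (I : DyadicI) (y : ℝ) : ℝ :=
  bco x t I * Set.indicator I.toSet (fun _ => (1:ℝ)) y

lemma bco_nonneg (x t : ℝ) (I : DyadicI) : 0 ≤ bco x t I := by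
  unfold bco
  have := qaux_nonneg (I.len⁻¹ * t) I.k
  have := qaux_nonneg (I.len⁻¹ * x) I.k
  positivity

lemma Bfun_nonneg (x t : ℝ) (I : DyadicI) (y : ℝ) : 0 ≤ Bfun x t I y := by
  unfold Bfun
  apply mul_nonneg (bco_nonneg x t I)
  apply Set.indicator_nonneg
  intro _ _
  norm_num

lemma claimA {N : ℕ} (hN : 2 ≤ N) (ψ φ : DyadicI → ℝ → ℝ)
    (hψ : ∀ (I : DyadicI) (x : ℝ),
      |ψ I x| ≤ I.len ^ (-(1/2 : ℝ)) * (1 + I.len⁻¹ * |x - I.center|) ^ (-(N : ℝ)))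
    (hφ : ∀ (I : DyadicI) (x : ℝ),
      |φ I x| ≤ I.len⁻¹ * (1 + I.len⁻¹ * |x - I.center|) ^ (-(N : ℝ)))
    (x t : ℝ) (I : DyadicI) (y : ℝ) :
    (φ I t) ^ 2 * (ψ I x) ^ 2 * Set.indicator I.toSet (fun _ => (1 : ℝ)) y / I.len
      ≤ (Bfun x t I y) ^ 2 := by
  have hL : (0:ℝ) < I.len := len_pos I
  by_cases hy : y ∈ I.toSet
  · rw [Set.indicator_of_mem hy, Bfun, Set.indicator_of_mem hy]
    set qt := qaux (I.len⁻¹ * t) I.k with hqt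
    set qx := qaux (I.len⁻¹ * x) I.k with hqx
    have hqt0 : 0 ≤ qt := qaux_nonneg _ _
    have hqx0 : 0 ≤ qx := qaux_nonneg _ _
    have step1 : (φ I t) ^ 2 ≤ (I.len⁻¹)^2 * qt^2 := by
      have h1 : |φ I t| ≤ I.len⁻¹ * qt := by
        refine (hφ I t).trans ?_
        apply mul_le_mul_of_nonneg_left (rpow_le_qaux hN I t) (le_of_lt (inv_pos.mpr hL))
      calc (φ I t)^2 = |φ I t|^2 := (sq_abs _).symm
      _ ≤ (I.len⁻¹ * qt)^2 := by
          apply pow_le_pow_left₀ (abs_nonneg _) h1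
      _ = (I.len⁻¹)^2 * qt^2 := by ring
    have step2 : (ψ I x) ^ 2 ≤ I.len⁻¹ * qx^2 := by
      have h1 : |ψ I x| ≤ I.len ^ (-(1/2:ℝ)) * qx := by
        refine (hψ I x).trans ?_
        apply mul_le_mul_of_nonneg_left (rpow_le_qaux hN I x)
        positivity
      have h2 : (I.len ^ (-(1/2:ℝ)))^2 = I.len⁻¹ := by
        rw [← Real.rpow_natCast (I.len ^ (-(1/2:ℝ))) 2, ← Real.rpow_mul hL.le]
        norm_num
        exact Real.rpow_neg_one I.len
      calc (ψ I x)^2 = |ψ I x|^2 := (sq_abs _).symm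
      _ ≤ (I.len ^ (-(1/2:ℝ)) * qx)^2 := by
          apply pow_le_pow_left₀ (abs_nonneg _) h1
      _ = (I.len ^ (-(1/2:ℝ)))^2 * qx^2 := by ring
      _ = I.len⁻¹ * qx^2 := by rw [h2]
    rw [mul_one, div_eq_mul_inv]
    have h12 : (φ I t)^2 * (ψ I x)^2 ≤ ((I.len⁻¹)^2*qt^2) * (I.len⁻¹*qx^2) :=
      mul_le_mul step1 step2 (sq_nonneg _) (by positivity)
    calc (φ I t)^2 * (ψ I x)^2 * I.len⁻¹
        ≤ ((I.len⁻¹)^2*qt^2) * (I.len⁻¹*qx^2) * I.len⁻¹ :=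
          mul_le_mul_of_nonneg_right h12 (by positivity)
    _ = ((I.len⁻¹)^2 * (qt*qx)) * ((I.len⁻¹)^2 * (qt*qx)) := by ring
    _ = ((I.len⁻¹)^2 * (qt*qx))^2 := (sq _).symm
    _ = (bco x t I * 1)^2 := by rw [mul_one, bco]
  · rw [Set.indicator_of_notMem hy, Bfun, Set.indicator_of_notMem hy]
    simp

lemma sq_two_zpow (j : ℤ) : ((2:ℝ)^j)^2 = (4:ℝ)^j := by
  have h4 : (4:ℝ)^j = ((2:ℝ)^(2:ℤ))^j := by norm_num
  rw [h4, ← zpow_natCast ((2:ℝ)^j) 2, ← zpow_mul, ← zpow_mul]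
  ring_nf

lemma Bfun_summable {x t y : ℝ} (hyx : y ≠ x) (hyt : y ≠ t) :
    Summable (fun I => Bfun x t I y) := by
  set dx := |x - y| with hdx
  set dt := |t - y| with hdt
  have hdx0 : 0 < dx := abs_pos.mpr (sub_ne_zero.mpr (Ne.symm hyx))
  have hdt0 : 0 < dt := abs_pos.mpr (sub_ne_zero.mpr (Ne.symm hyt))
  set M : ℤ → ℝ := fun j =>
    16 * ((4:ℝ)^j)⁻¹ * (((1 + ((2:ℝ)^j)⁻¹ * dt)^2)⁻¹ * ((1 + ((2:ℝ)^j)⁻¹ * dx)^2)⁻¹) with hM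
  have hM0 : ∀ j, 0 ≤ M j := by intro j; rw [hM]; positivity
  have hstep1 : ∀ j k : ℤ, Bfun x t ⟨j, k⟩ y
      ≤ (if k = ⌊((2:ℝ)^j)⁻¹ * y⌋ then M j else 0) := by
    intro j k
    by_cases hy : y ∈ (DyadicI.mk j k).toSet
    · have hk : k = ⌊((2:ℝ)^j)⁻¹ * y⌋ := mem_floor hy
      rw [if_pos hk, Bfun, Set.indicator_of_mem hy, mul_one]
      have hL : (0:ℝ) < (DyadicI.mk j k).len := len_pos _
      have hqt : qaux ((DyadicI.mk j k).len⁻¹ * t) k ≤ 4 * ((1 + ((2:ℝ)^j)⁻¹ * dt)^2)⁻¹ := by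
        have := qaux_near hy t
        simpa [DyadicI.len, hdt] using this
      have hqx : qaux ((DyadicI.mk j k).len⁻¹ * x) k ≤ 4 * ((1 + ((2:ℝ)^j)⁻¹ * dx)^2)⁻¹ := by
        have := qaux_near hy x
        simpa [DyadicI.len, hdx] using this
      have hlen : ((DyadicI.mk j k).len⁻¹)^2 = ((4:ℝ)^j)⁻¹ := by
        rw [DyadicI.len]
        rw [← sq_two_zpow j]
        rw [inv_pow]
      rw [bco, hlen]
      have hq1 : (0:ℝ) ≤ qaux ((DyadicI.mk j k).len⁻¹ * t) k := qaux_nonneg _ _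
      have hq2 : (0:ℝ) ≤ qaux ((DyadicI.mk j k).len⁻¹ * x) k := qaux_nonneg _ _
      have hmul : qaux ((DyadicI.mk j k).len⁻¹ * t) k * qaux ((DyadicI.mk j k).len⁻¹ * x) k
          ≤ (4 * ((1 + ((2:ℝ)^j)⁻¹ * dt)^2)⁻¹) * (4 * ((1 + ((2:ℝ)^j)⁻¹ * dx)^2)⁻¹) :=
        mul_le_mul hqt hqx hq2 (by positivity)
      rw [hM]
      calc ((4:ℝ)^j)⁻¹ * (qaux ((DyadicI.mk j k).len⁻¹ * t) k * qaux ((DyadicI.mk j k).len⁻¹ * x) k)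
          ≤ ((4:ℝ)^j)⁻¹ * ((4 * ((1 + ((2:ℝ)^j)⁻¹ * dt)^2)⁻¹) * (4 * ((1 + ((2:ℝ)^j)⁻¹ * dx)^2)⁻¹)) :=
            mul_le_mul_of_nonneg_left hmul (by positivity)
      _ = 16 * ((4:ℝ)^j)⁻¹ * (((1 + ((2:ℝ)^j)⁻¹ * dt)^2)⁻¹ * ((1 + ((2:ℝ)^j)⁻¹ * dx)^2)⁻¹) := by
            ring
    · rw [Bfun, Set.indicator_of_notMem hy, mul_zero]
      split
      · exact hM0 j
      · exact le_refl 0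
  have hstep2 : ∀ j : ℤ, Summable (fun k : ℤ => Bfun x t ⟨j, k⟩ y) := by
    intro j
    apply Summable.of_nonneg_of_le (fun k => Bfun_nonneg x t _ y) (hstep1 j)
    apply summable_of_ne_finset_zero (s := {⌊((2:ℝ)^j)⁻¹ * y⌋})
    intro k hk
    simp only [Finset.mem_singleton] at hk
    rw [if_neg hk]
  have hstep3 : ∀ j : ℤ, ∑' k : ℤ, Bfun x t ⟨j, k⟩ y ≤ M j := by
    intro j
    have hsg : Summable (fun k : ℤ => if k = ⌊((2:ℝ)^j)⁻¹ * y⌋ then M j else 0) := by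
      apply summable_of_ne_finset_zero (s := {⌊((2:ℝ)^j)⁻¹ * y⌋})
      intro k hk
      simp only [Finset.mem_singleton] at hk
      rw [if_neg hk]
    calc ∑' k : ℤ, Bfun x t ⟨j, k⟩ y
        ≤ ∑' k : ℤ, (if k = ⌊((2:ℝ)^j)⁻¹ * y⌋ then M j else 0) :=
          Summable.tsum_le_tsum (hstep1 j) (hstep2 j) hsg
    _ = M j := tsum_ite_eq _ _
  have hstep4 : Summable (fun j : ℤ => ∑' k : ℤ, Bfun x t ⟨j, k⟩ y) := by
    have hMb1 : ∀ j : ℤ, M j ≤ 16 * (4:ℝ) ^ (-j) := by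
      intro j
      rw [hM, zpow_neg]
      have h1 : ((1 + ((2:ℝ)^j)⁻¹ * dt)^2)⁻¹ ≤ 1 := by
        rw [inv_le_one_iff₀]; right
        nlinarith [mul_nonneg (le_of_lt (inv_pos.mpr (zpow_pos two_pos j))) hdt0.le]
      have h2 : ((1 + ((2:ℝ)^j)⁻¹ * dx)^2)⁻¹ ≤ 1 := by
        rw [inv_le_one_iff₀]; right
        nlinarith [mul_nonneg (le_of_lt (inv_pos.mpr (zpow_pos two_pos j))) hdx0.le]
      have h3 : ((1 + ((2:ℝ)^j)⁻¹ * dt)^2)⁻¹ * ((1 + ((2:ℝ)^j)⁻¹ * dx)^2)⁻¹ ≤ 1 := by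
        calc ((1 + ((2:ℝ)^j)⁻¹ * dt)^2)⁻¹ * ((1 + ((2:ℝ)^j)⁻¹ * dx)^2)⁻¹
            ≤ 1 * 1 := mul_le_mul h1 h2 (by positivity) one_pos.le
        _ = 1 := mul_one 1
      nlinarith [inv_pos.mpr (zpow_pos (by norm_num : (0:ℝ) < 4) j), h3,
        mul_le_mul_of_nonneg_left h3 (le_of_lt (inv_pos.mpr (zpow_pos (by norm_num : (0:ℝ) < 4) j)))]
    have hMb2 : ∀ j : ℤ, M j ≤ (16 / (dt * dx)^2) * (4:ℝ) ^ j := by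
      intro j
      rw [hM]
      have hLp : (0:ℝ) < (2:ℝ)^j := zpow_pos two_pos j
      have h1 : ((1 + ((2:ℝ)^j)⁻¹ * dt)^2)⁻¹ ≤ (((2:ℝ)^j)⁻¹ * dt)⁻¹^2 := by
        rw [← inv_pow]
        apply pow_le_pow_left₀ (by positivity)
        apply inv_anti₀ (by positivity)
        nlinarith [mul_pos (inv_pos.mpr hLp) hdt0]
      have h2 : ((1 + ((2:ℝ)^j)⁻¹ * dx)^2)⁻¹ ≤ (((2:ℝ)^j)⁻¹ * dx)⁻¹^2 := by
        rw [← inv_pow]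
        apply pow_le_pow_left₀ (by positivity)
        apply inv_anti₀ (by positivity)
        nlinarith [mul_pos (inv_pos.mpr hLp) hdx0]
      have hmul2 : ((1 + ((2:ℝ)^j)⁻¹ * dt)^2)⁻¹ * ((1 + ((2:ℝ)^j)⁻¹ * dx)^2)⁻¹
          ≤ (((2:ℝ)^j)⁻¹ * dt)⁻¹^2 * (((2:ℝ)^j)⁻¹ * dx)⁻¹^2 :=
        mul_le_mul h1 h2 (by positivity) (by positivity)
      have heq : 16 * ((4:ℝ)^j)⁻¹ * ((((2:ℝ)^j)⁻¹ * dt)⁻¹^2 * (((2:ℝ)^j)⁻¹ * dx)⁻¹^2)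
          = (16 / (dt * dx)^2) * (4:ℝ) ^ j := by
        rw [← sq_two_zpow j]
        field_simp
      calc 16 * ((4:ℝ)^j)⁻¹ * (((1 + ((2:ℝ)^j)⁻¹ * dt)^2)⁻¹ * ((1 + ((2:ℝ)^j)⁻¹ * dx)^2)⁻¹)
          ≤ 16 * ((4:ℝ)^j)⁻¹ * ((((2:ℝ)^j)⁻¹ * dt)⁻¹^2 * (((2:ℝ)^j)⁻¹ * dx)⁻¹^2) :=
            mul_le_mul_of_nonneg_left hmul2 (by positivity)
      _ = (16 / (dt * dx)^2) * (4:ℝ) ^ j := heq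
    have := geomZ (r := 4) (by norm_num)
      (f := fun j : ℤ => ∑' k : ℤ, Bfun x t ⟨j, k⟩ y)
      (fun j => tsum_nonneg (fun k => Bfun_nonneg x t _ y))
      (fun j => (hstep3 j).trans (hMb1 j))
      (fun j => (hstep3 j).trans (hMb2 j)) 0
    exact this.1
  have hprod : Summable (fun p : ℤ × ℤ => Bfun x t ⟨p.1, p.2⟩ y) := by
    rw [summable_prod_of_nonneg (fun p => Bfun_nonneg x t _ y)]
    exact ⟨fun j => hstep2 j, hstep4⟩
  rw [← dyadicEquiv.summable_iff]
  exact hprod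

lemma main_sum {x t : ℝ} (hxt : x ≠ t) :
    Summable (fun I => bco x t I * I.len) ∧
      ∑' I : DyadicI, bco x t I * I.len ≤ 1200 / |x - t| := by
  set d := |x - t| with hd
  have hd0 : 0 < d := abs_pos.mpr (sub_ne_zero.mpr hxt)
  -- per-scale analysis
  have key : ∀ j : ℤ, (Summable fun k : ℤ => bco x t ⟨j, k⟩ * (2:ℝ)^j) ∧
      (∑' k : ℤ, bco x t ⟨j, k⟩ * (2:ℝ)^j)
        ≤ 200 * ((2:ℝ)^j)⁻¹ * ((1 + ((2:ℝ)^j)⁻¹ * d)^2)⁻¹ := by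
    intro j
    have hLp : (0:ℝ) < (2:ℝ)^j := zpow_pos two_pos j
    set u := ((2:ℝ)^j)⁻¹ * t with hu
    set v := ((2:ℝ)^j)⁻¹ * x with hv
    set Dj := ((2:ℝ)^j)⁻¹ * d with hDj
    have hDj0 : 0 ≤ Dj := by positivity
    have heq : ∀ k : ℤ, bco x t ⟨j, k⟩ * (2:ℝ)^j = ((2:ℝ)^j)⁻¹ * (qaux u k * qaux v k) := by
      intro k
      rw [bco]
      have hlen : (DyadicI.mk j k).len = (2:ℝ)^j := rfl
      rw [hlen, hu, hv]
      field_simp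
    have hbound : ∀ k : ℤ, qaux u k * qaux v k
        ≤ 4 * ((1 + Dj)^2)⁻¹ * (qaux u k + qaux v k) := by
      intro k
      have ha : (0:ℝ) ≤ |u - ((k:ℝ) + 1/2)| := abs_nonneg _
      have hb : (0:ℝ) ≤ |v - ((k:ℝ) + 1/2)| := abs_nonneg _
      have huv : |u - v| = Dj := by
        rw [hu, hv, hDj, hd, ← mul_sub, abs_mul, abs_of_pos (inv_pos.mpr hLp), abs_sub_comm]
      have hab : Dj ≤ |u - ((k:ℝ) + 1/2)| + |v - ((k:ℝ) + 1/2)| := by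
        rw [← huv]
        calc |u - v| ≤ |u - ((k:ℝ) + 1/2)| + |((k:ℝ) + 1/2) - v| := abs_sub_le _ _ _
        _ = |u - ((k:ℝ) + 1/2)| + |v - ((k:ℝ) + 1/2)| := by rw [abs_sub_comm ((k:ℝ)+1/2) v]
      exact prodq ha hb hDj0 hab
    have hmaj : Summable (fun k : ℤ =>
        ((2:ℝ)^j)⁻¹ * (4 * ((1 + Dj)^2)⁻¹ * (qaux u k + qaux v k))) := by
      apply Summable.mul_left
      apply Summable.mul_left
      exact (ksum u).1.add (ksum v).1
    have hle : ∀ k : ℤ, bco x t ⟨j, k⟩ * (2:ℝ)^j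
        ≤ ((2:ℝ)^j)⁻¹ * (4 * ((1 + Dj)^2)⁻¹ * (qaux u k + qaux v k)) := by
      intro k
      rw [heq k]
      apply mul_le_mul_of_nonneg_left (hbound k) (by positivity)
    have hnn : ∀ k : ℤ, 0 ≤ bco x t ⟨j, k⟩ * (2:ℝ)^j := by
      intro k
      have := bco_nonneg x t ⟨j, k⟩
      positivity
    have hsum : Summable (fun k : ℤ => bco x t ⟨j, k⟩ * (2:ℝ)^j) :=
      Summable.of_nonneg_of_le hnn hle hmaj
    refine ⟨hsum, ?_⟩
    calc ∑' k : ℤ, bco x t ⟨j, k⟩ * (2:ℝ)^j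
        ≤ ∑' k : ℤ, ((2:ℝ)^j)⁻¹ * (4 * ((1 + Dj)^2)⁻¹ * (qaux u k + qaux v k)) :=
          Summable.tsum_le_tsum hle hsum hmaj
    _ = ((2:ℝ)^j)⁻¹ * (4 * ((1 + Dj)^2)⁻¹) * ((∑' k : ℤ, qaux u k) + ∑' k : ℤ, qaux v k) := by
          rw [tsum_mul_left, tsum_mul_left, Summable.tsum_add (ksum u).1 (ksum v).1]
          ring
    _ ≤ ((2:ℝ)^j)⁻¹ * (4 * ((1 + Dj)^2)⁻¹) * 50 := by
          apply mul_le_mul_of_nonneg_left ?_ (by positivity)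
          have h1 := (ksum u).2
          have h2 := (ksum v).2
          linarith
    _ = 200 * ((2:ℝ)^j)⁻¹ * ((1 + Dj)^2)⁻¹ := by ring
  -- sum over scales
  obtain ⟨n, hn1, hn2⟩ := exists_mem_Ico_zpow hd0 (one_lt_two (α := ℝ))
  have hF0 : ∀ j : ℤ, 0 ≤ ∑' k : ℤ, bco x t ⟨j, k⟩ * (2:ℝ)^j := by
    intro j
    apply tsum_nonneg
    intro k
    have := bco_nonneg x t ⟨j, k⟩
    positivity
  have hFb1 : ∀ j : ℤ, (∑' k : ℤ, bco x t ⟨j, k⟩ * (2:ℝ)^j) ≤ 200 * (2:ℝ)^(-j) := by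
    intro j
    refine (key j).2.trans ?_
    rw [zpow_neg]
    have h1 : ((1 + ((2:ℝ)^j)⁻¹ * d)^2)⁻¹ ≤ 1 := by
      rw [inv_le_one_iff₀]; right
      nlinarith [mul_nonneg (le_of_lt (inv_pos.mpr (zpow_pos (two_pos (α := ℝ)) j))) hd0.le]
    nlinarith [inv_pos.mpr (zpow_pos (two_pos (α := ℝ)) j)]
  have hFb2 : ∀ j : ℤ, (∑' k : ℤ, bco x t ⟨j, k⟩ * (2:ℝ)^j) ≤ (200 / d^2) * (2:ℝ)^j := by
    intro j
    refine (key j).2.trans ?_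
    have hLp : (0:ℝ) < (2:ℝ)^j := zpow_pos two_pos j
    have h1 : ((1 + ((2:ℝ)^j)⁻¹ * d)^2)⁻¹ ≤ (((2:ℝ)^j)⁻¹ * d)⁻¹^2 := by
      rw [← inv_pow]
      apply pow_le_pow_left₀ (by positivity)
      apply inv_anti₀ (by positivity)
      nlinarith [mul_pos (inv_pos.mpr hLp) hd0]
    have heq2 : 200 * ((2:ℝ)^j)⁻¹ * ((((2:ℝ)^j)⁻¹ * d)⁻¹^2) = (200 / d^2) * (2:ℝ)^j := by
      field_simp
    calc 200 * ((2:ℝ)^j)⁻¹ * ((1 + ((2:ℝ)^j)⁻¹ * d)^2)⁻¹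
        ≤ 200 * ((2:ℝ)^j)⁻¹ * ((((2:ℝ)^j)⁻¹ * d)⁻¹^2) :=
          mul_le_mul_of_nonneg_left h1 (by positivity)
    _ = (200 / d^2) * (2:ℝ)^j := heq2
  obtain ⟨hSj, hTj⟩ := geomZ (r := 2) one_lt_two hF0 hFb1 hFb2 (n + 1)
  -- assemble
  have hprod : Summable (fun p : ℤ × ℤ => bco x t ⟨p.1, p.2⟩ * (2:ℝ)^p.1) := by
    rw [summable_prod_of_nonneg]
    · exact ⟨fun j => (key j).1, hSj⟩
    · intro p
      have := bco_nonneg x t ⟨p.1, p.2⟩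
      positivity
  have hsumI : Summable (fun I : DyadicI => bco x t I * I.len) := by
    rw [← dyadicEquiv.summable_iff]
    exact hprod
  refine ⟨hsumI, ?_⟩
  have htsum_eq : ∑' I : DyadicI, bco x t I * I.len
      = ∑' j : ℤ, ∑' k : ℤ, bco x t ⟨j, k⟩ * (2:ℝ)^j := by
    rw [← dyadicEquiv.tsum_eq (f := fun I : DyadicI => bco x t I * I.len)]
    exact Summable.tsum_prod' hprod (fun j => (key j).1)
  rw [htsum_eq]
  refine hTj.trans ?_
  have e1 : (2:ℝ) ^ (-(n+1) : ℤ) ≤ d⁻¹ := by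
    rw [zpow_neg]
    apply inv_anti₀ hd0
    exact hn2.le
  have e2 : (2:ℝ) ^ (n+1 : ℤ) ≤ 2 * d := by
    rw [zpow_add₀ (two_ne_zero (α := ℝ)), zpow_one]
    nlinarith [hn1]
  have e3 : ((1:ℝ) - 2⁻¹)⁻¹ = 2 := by norm_num
  rw [e3]
  have h200 : (200:ℝ) * (2:ℝ)^(-(n+1):ℤ) ≤ 200 / d := by
    rw [div_eq_mul_inv]
    nlinarith [e1]
  have h2002 : (200 / d^2) * (2:ℝ)^(n+1:ℤ) ≤ 400 / d := by
    rw [div_eq_mul_inv, div_eq_mul_inv]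
    have : (200:ℝ) * (d^2)⁻¹ * (2:ℝ)^(n+1:ℤ) ≤ 200 * (d^2)⁻¹ * (2 * d) := by
      apply mul_le_mul_of_nonneg_left e2 (by positivity)
    have heq3 : (200:ℝ) * (d^2)⁻¹ * (2 * d) = 400 * d⁻¹ := by
      field_simp
      ring
    linarith [this, heq3.le, heq3.ge]
  calc (200 * (2:ℝ)^(-(n+1):ℤ) + (200 / d^2) * (2:ℝ)^(n+1:ℤ)) * 2
      ≤ (200 / d + 400 / d) * 2 := by nlinarith [h200, h2002]
  _ = 1200 / d := by ring


end Statement8Aux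


/-- one-variable kernel size estimate for paraproduct kernels: the `L¹` norm in `y`
of the square function `(∑_I φ_I(t)²ψ_I(x)²χ_I(y)/|I|)^{1/2}` is bounded by `C/|x−t|`. -/
theorem statement8 (N : ℕ) (hN : 2 ≤ N) :
    ∃ C : ℝ, 0 < C ∧
    ∀ ψ φ : DyadicI → ℝ → ℝ,
      (∀ (I : DyadicI) (x : ℝ),
        |ψ I x| ≤ I.len ^ (-(1/2 : ℝ)) * (1 + I.len⁻¹ * |x - I.center|) ^ (-(N : ℝ))) →
      (∀ (I : DyadicI) (x : ℝ),
        |φ I x| ≤ I.len⁻¹ * (1 + I.len⁻¹ * |x - I.center|) ^ (-(N : ℝ))) →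
      ∀ x t : ℝ, x ≠ t →
        (∫ y, Real.sqrt (∑' I : DyadicI,
            (φ I t) ^ 2 * (ψ I x) ^ 2 * Set.indicator I.toSet (fun _ => (1 : ℝ)) y / I.len)) ≤
          C / |x - t| := by
  refine ⟨1200, by norm_num, ?_⟩
  intro ψ φ hψ hφ x t hxt
  set d := |x - t| with hd
  have hd0 : 0 < d := abs_pos.mpr (sub_ne_zero.mpr hxt)
  obtain ⟨hsumM, hM⟩ := main_sum hxt
  set T : ℝ → ENNReal := fun y => ∑' I : DyadicI, ENNReal.ofReal (Bfun x t I y) with hT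
  have hind : ∀ I : DyadicI, (fun y => ENNReal.ofReal (Bfun x t I y))
      = Set.indicator I.toSet (fun _ => ENNReal.ofReal (bco x t I)) := by
    intro I
    funext y
    by_cases hy : y ∈ I.toSet
    · rw [Set.indicator_of_mem hy, Bfun, Set.indicator_of_mem hy, mul_one]
    · rw [Set.indicator_of_notMem hy, Bfun, Set.indicator_of_notMem hy, mul_zero,
        ENNReal.ofReal_zero]
  have hmeasI : ∀ I : DyadicI, Measurable (fun y => ENNReal.ofReal (Bfun x t I y)) := by
    intro I
    rw [hind I]
    exact measurable_const.indicator measurableSet_Ico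
  have hTmeas : Measurable T := Measurable.ennreal_tsum hmeasI
  have hlint : ∀ I : DyadicI, (∫⁻ y, ENNReal.ofReal (Bfun x t I y))
      = ENNReal.ofReal (bco x t I * I.len) := by
    intro I
    have h1 : (∫⁻ y, ENNReal.ofReal (Bfun x t I y))
        = ∫⁻ y, (Set.Ico ((I.k:ℝ) * (2:ℝ)^I.j) (((I.k:ℝ)+1) * (2:ℝ)^I.j)).indicator
            (fun _ => ENNReal.ofReal (bco x t I)) y :=
      lintegral_congr (fun y => congrFun (hind I) y)
    rw [h1, lintegral_indicator measurableSet_Ico, setLIntegral_const, Real.volume_Ico,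
      ← ENNReal.ofReal_mul (bco_nonneg x t I)]
    congr 1
    rw [DyadicI.len]
    ring
  have hTint : (∫⁻ y, T y) = ∑' I : DyadicI, ENNReal.ofReal (bco x t I * I.len) := by
    rw [hT]
    rw [lintegral_tsum (fun I => (hmeasI I).aemeasurable)]
    exact tsum_congr hlint
  have hTbound : (∫⁻ y, T y) ≤ ENNReal.ofReal (1200 / d) := by
    rw [hTint, ← ENNReal.ofReal_tsum_of_nonneg
      (fun I => mul_nonneg (bco_nonneg x t I) (len_pos I).le) hsumM]
    exact ENNReal.ofReal_le_ofReal hM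
  set g : ℝ → ℝ := fun y => (T y).toReal with hg
  have hgmeas : Measurable g := hTmeas.ennreal_toReal
  have hg0 : ∀ y, 0 ≤ g y := fun y => ENNReal.toReal_nonneg
  have hgint : Integrable g := by
    refine ⟨hgmeas.aestronglyMeasurable, ?_⟩
    rw [hasFiniteIntegral_iff_norm]
    have hle1 : (∫⁻ y, ENNReal.ofReal ‖g y‖) ≤ ∫⁻ y, T y := by
      apply lintegral_mono
      intro y
      show ENNReal.ofReal ‖g y‖ ≤ T y
      rw [norm_of_nonneg (hg0 y)]
      exact ENNReal.ofReal_toReal_le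
    exact lt_of_le_of_lt hle1 (lt_of_le_of_lt hTbound ENNReal.ofReal_lt_top)
  have hzero : volume ({x, t} : Set ℝ) = 0 := by
    have : ({x, t} : Set ℝ) = {x} ∪ {t} := by rw [Set.insert_eq]
    rw [this]
    exact measure_union_null Real.volume_singleton Real.volume_singleton
  have hae : ∀ᵐ y : ℝ, y ∉ ({x, t} : Set ℝ) := by
    rw [ae_iff]
    have hs : {a : ℝ | ¬ a ∉ ({x, t} : Set ℝ)} = ({x, t} : Set ℝ) := by
      ext a
      simp
      tauto
    rw [hs]
    exact hzero
  have hle : ∀ᵐ y : ℝ, Real.sqrt (∑' I : DyadicI,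
      (φ I t) ^ 2 * (ψ I x) ^ 2 * Set.indicator I.toSet (fun _ => (1 : ℝ)) y / I.len) ≤ g y := by
    filter_upwards [hae] with y hy
    have hy1 : y ≠ x := fun h => hy (by rw [h]; exact Set.mem_insert x {t})
    have hy2 : y ≠ t := fun h => hy (by rw [h]; exact Set.mem_insert_of_mem x rfl)
    have hsB := Bfun_summable hy1 hy2
    have h1 : Real.sqrt (∑' I : DyadicI,
        (φ I t) ^ 2 * (ψ I x) ^ 2 * Set.indicator I.toSet (fun _ => (1 : ℝ)) y / I.len)
        ≤ ∑' I : DyadicI, Bfun x t I y := by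
      apply sqrt_tsum_le ?_ (fun I => Bfun_nonneg x t I y)
        (fun I => claimA hN ψ φ hψ hφ x t I y) hsB
      intro I
      have hind0 : (0:ℝ) ≤ Set.indicator I.toSet (fun _ => (1:ℝ)) y :=
        Set.indicator_nonneg (fun _ _ => one_pos.le) y
      have := len_pos I
      positivity
    have h2 : (∑' I : DyadicI, Bfun x t I y) = g y := by
      have hTy : T y = ENNReal.ofReal (∑' I : DyadicI, Bfun x t I y) := by
        show (∑' I : DyadicI, ENNReal.ofReal (Bfun x t I y)) = _
        rw [ENNReal.ofReal_tsum_of_nonneg (fun I => Bfun_nonneg x t I y) hsB]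
      show _ = (T y).toReal
      rw [hTy, ENNReal.toReal_ofReal (tsum_nonneg (fun I => Bfun_nonneg x t I y))]
    rw [← h2]
    exact h1
  calc (∫ y, Real.sqrt (∑' I : DyadicI,
      (φ I t) ^ 2 * (ψ I x) ^ 2 * Set.indicator I.toSet (fun _ => (1 : ℝ)) y / I.len))
      ≤ ∫ y, g y :=
        integral_mono_of_nonneg (ae_of_all _ fun y => Real.sqrt_nonneg _) hgint hle
  _ = (∫⁻ y, ENNReal.ofReal (g y)).toReal :=
        integral_eq_lintegral_of_nonneg_ae (ae_of_all _ hg0) hgmeas.aestronglyMeasurable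
  _ ≤ (ENNReal.ofReal (1200 / d)).toReal := by
        apply ENNReal.toReal_mono ENNReal.ofReal_ne_top
        exact le_trans (lintegral_mono fun y => ENNReal.ofReal_toReal_le) hTbound
  _ = 1200 / d := ENNReal.toReal_ofReal (by positivity)
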